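/- Fix k ≥ 2. The hypergraph J_k of copies of a special k-cluster D_k is c-sparse for c = 2^{2k^2−2k−1}: every set S of vertices of J_k spans fewer than 2^{2k^2−2k−1}·|S|^2 edges. -/

import Mathlib

inductive IsSpecialCluster : ℕ → Finset (Finset ℕ) → Finset ℕ → Finset ℕ → Prop
  | base (w x y z : ℕ) (hwx : w ≠ x) (hwy : w ≠ y) (hwz : w ≠ z)
      (hxy : x ≠ y) (hxz : x ≠ z) (hyz : y ≠ z) :
      IsSpecialCluster 2 {{w, x}, {x, y}, {y, z}} {w, x} {y, z}
  | step (k : ℕ) (D : Finset (Finset ℕ)) (a b : Finset ℕ) (x y : ℕ)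
      (hD : IsSpecialCluster k D a b)
      (hx : ∀ e ∈ D, x ∉ e) (hy : ∀ e ∈ D, y ∉ e) (hxy : x ≠ y) :
      IsSpecialCluster (k + 1) (insert (insert y a) (D.image (insert x ·)))
        (insert y a) (insert x b)

lemma cluster_props {k : ℕ} {D : Finset (Finset ℕ)} {a b : Finset ℕ}
    (hD : IsSpecialCluster k D a b) :
    a ∈ D ∧ b ∈ D ∧ a ≠ b ∧ (∀ e ∈ D, e ⊆ a ∪ b) ∧ D.card ≤ k + 1 := by
  induction hD with
  | base w x y z hwx hwy hwz hxy hxz hyz =>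
    refine ⟨by simp, by simp, ?_, ?_, ?_⟩
    · intro h
      have : w ∈ ({y, z} : Finset ℕ) := h ▸ by simp
      simp [hwy, hwz] at this
    · intro e he
      simp only [Finset.mem_insert, Finset.mem_singleton] at he
      rcases he with rfl | rfl | rfl <;> intro v hv <;>
        simp only [Finset.mem_insert, Finset.mem_singleton] at hv <;>
        rcases hv with rfl | rfl <;> simp
    · exact (Finset.card_insert_le _ _).trans (Nat.succ_le_succ
        ((Finset.card_insert_le _ _).trans (by simp)))
  | step k D a b x y hD hx hy hxy ih =>
    obtain ⟨ha, hb, hab, hsub, hcard⟩ := ih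
    refine ⟨Finset.mem_insert_self _ _, Finset.mem_insert_of_mem
      (Finset.mem_image_of_mem _ hb), ?_, ?_, ?_⟩
    · intro h
      have : y ∈ insert x b := h ▸ Finset.mem_insert_self y a
      rcases Finset.mem_insert.1 this with h' | h'
      · exact hxy h'.symm
      · exact hy b hb h'
    · intro e he
      rcases Finset.mem_insert.1 he with rfl | he
      · exact Finset.subset_union_left
      · obtain ⟨e₀, he₀, rfl⟩ := Finset.mem_image.1 he
        intro v hv
        rcases Finset.mem_insert.1 hv with rfl | hv
        · exact Finset.mem_union_right _ (Finset.mem_insert_self _ _)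
        · rcases Finset.mem_union.1 (hsub e₀ he₀ hv) with h' | h'
          · exact Finset.mem_union_left _ (Finset.mem_insert_of_mem h')
          · exact Finset.mem_union_right _ (Finset.mem_insert_of_mem h')
    · exact (Finset.card_insert_le _ _).trans
        (Nat.succ_le_succ (Finset.card_image_le.trans hcard))

lemma image_ne_image {α β : Type*} [DecidableEq α] [DecidableEq β]
    {ψ : α → β} {s : Set α} (hψ : Set.InjOn ψ s) {a b : Finset α}
    (ha : ↑a ⊆ s) (hb : ↑b ⊆ s) (hab : a ≠ b) :
    a.image ψ ≠ b.image ψ := by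
  intro h
  apply hab
  ext v
  constructor
  · intro hv
    have : ψ v ∈ b.image ψ := h ▸ Finset.mem_image_of_mem _ hv
    obtain ⟨w, hw, hwv⟩ := Finset.mem_image.1 this
    exact hψ (hb hw) (ha hv) hwv ▸ hw
  · intro hv
    have : ψ v ∈ a.image ψ := h.symm ▸ Finset.mem_image_of_mem _ hv
    obtain ⟨w, hw, hwv⟩ := Finset.mem_image.1 this
    exact hψ (ha hw) (hb hv) hwv ▸ hw

lemma card_filter_subset_le {k n : ℕ} {S : Finset (Finset (Fin k × Fin n))}
    (htrans : ∀ e ∈ S, ∀ i : Fin k, (e.filter fun v => v.1 = i).card = 1)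
    {s t : Finset (Fin k × Fin n)} (hs : s ∈ S) (ht : t ∈ S) :
    (S.filter fun u => u ⊆ s ∪ t).card ≤ 2 ^ k := by
  classical
  set W := S.filter fun u => u ⊆ s ∪ t with hW
  have hmap : ∀ u ∈ W, (fun i : Fin k => u.filter fun v => v.1 = i) ∈
      Fintype.piFinset (fun i : Fin k => ((s ∪ t).filter fun v => v.1 = i).powersetCard 1) := by
    intro u hu
    rw [Fintype.mem_piFinset]
    intro i
    rw [Finset.mem_powersetCard]
    have huS := (Finset.mem_filter.1 hu).1
    have hsub := (Finset.mem_filter.1 hu).2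
    exact ⟨Finset.filter_subset_filter _ hsub, htrans u huS i⟩
  have hinj : ∀ u ∈ W, ∀ u' ∈ W,
      (fun i : Fin k => u.filter fun v => v.1 = i) =
      (fun i : Fin k => u'.filter fun v => v.1 = i) → u = u' := by
    intro u _ u' _ h
    ext v
    have h2 := congrFun h v.1
    constructor
    · intro hv
      have : v ∈ u'.filter fun w => w.1 = v.1 := h2 ▸ (Finset.mem_filter.2 ⟨hv, rfl⟩)
      exact (Finset.mem_filter.1 this).1
    · intro hv
      have : v ∈ u.filter fun w => w.1 = v.1 := h2.symm ▸ (Finset.mem_filter.2 ⟨hv, rfl⟩)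
      exact (Finset.mem_filter.1 this).1
  have hle := Finset.card_le_card_of_injOn _ hmap hinj
  refine hle.trans ?_
  rw [Fintype.card_piFinset]
  calc ∏ i : Fin k, (((s ∪ t).filter fun v => v.1 = i).powersetCard 1).card
      ≤ ∏ _i : Fin k, 2 := by
        apply Finset.prod_le_prod'
        intro i _
        rw [Finset.card_powersetCard]
        have h1 : ((s ∪ t).filter fun v => v.1 = i).card ≤ 2 := by
          have : ((s ∪ t).filter fun v => v.1 = i) ⊆
              (s.filter fun v => v.1 = i) ∪ (t.filter fun v => v.1 = i) := by
            rw [← Finset.filter_union]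
          calc ((s ∪ t).filter fun v => v.1 = i).card
              ≤ ((s.filter fun v => v.1 = i) ∪ (t.filter fun v => v.1 = i)).card :=
                Finset.card_le_card this
            _ ≤ (s.filter fun v => v.1 = i).card + (t.filter fun v => v.1 = i).card :=
                Finset.card_union_le _ _
            _ ≤ 2 := by rw [htrans s hs i, htrans t ht i]
        calc (((s ∪ t).filter fun v => v.1 = i).card).choose 1
            ≤ ((s ∪ t).filter fun v => v.1 = i).card := by rw [Nat.choose_one_right]
          _ ≤ 2 := h1
    _ = 2 ^ k := by simp

theorem stmt16 (k : ℕ) (hk : 2 ≤ k) (D : Finset (Finset ℕ)) (a b : Finset ℕ)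
    (hD : IsSpecialCluster k D a b) (n : ℕ) (S : Finset (Finset (Fin k × Fin n)))
    (htrans : ∀ e ∈ S, ∀ i : Fin k, (e.filter fun v => v.1 = i).card = 1) :
    Set.ncard {A : Finset (Finset (Fin k × Fin n)) | A ⊆ S ∧
      ∃ ψ : ℕ → Fin k × Fin n, Set.InjOn ψ ↑(D.sup id) ∧
        A = D.image fun e => e.image ψ} ≤ 2 ^ (2 * k ^ 2 - 2 * k - 1) * S.card ^ 2 := by
  classical
  obtain ⟨haD, hbD, hab, hsub, hcardD⟩ := cluster_props hD
  set T : Finset (Finset (Finset (Fin k × Fin n))) :=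
    (S ×ˢ S).biUnion (fun p =>
      ((S.filter fun u => u ⊆ p.1 ∪ p.2).powerset.filter fun C => C.card ≤ k - 1).image
        fun C => insert p.1 (insert p.2 C)) with hT
  have hsubT : {A : Finset (Finset (Fin k × Fin n)) | A ⊆ S ∧
      ∃ ψ : ℕ → Fin k × Fin n, Set.InjOn ψ ↑(D.sup id) ∧
        A = D.image fun e => e.image ψ} ⊆ ↑T := by
    rintro A ⟨hAS, ψ, hψ, rfl⟩
    set s := a.image ψ with hs
    set t := b.image ψ with ht
    have hsA : s ∈ D.image fun e => e.image ψ := Finset.mem_image_of_mem _ haD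
    have htA : t ∈ D.image fun e => e.image ψ := Finset.mem_image_of_mem _ hbD
    have hsS : s ∈ S := hAS hsA
    have htS : t ∈ S := hAS htA
    have hasup : (↑a : Set ℕ) ⊆ ↑(D.sup id) :=
      Finset.coe_subset.2 (Finset.le_sup (f := id) haD)
    have hbsup : (↑b : Set ℕ) ⊆ ↑(D.sup id) :=
      Finset.coe_subset.2 (Finset.le_sup (f := id) hbD)
    have hst : s ≠ t := image_ne_image hψ hasup hbsup hab
    have hAW : (D.image fun e => e.image ψ) ⊆ S.filter fun u => u ⊆ s ∪ t := by
      intro u hu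
      obtain ⟨e, he, rfl⟩ := Finset.mem_image.1 hu
      refine Finset.mem_filter.2 ⟨hAS hu, ?_⟩
      calc e.image ψ ⊆ (a ∪ b).image ψ := Finset.image_subset_image (hsub e he)
        _ = s ∪ t := Finset.image_union _ _
    have hpair : ({s, t} : Finset (Finset (Fin k × Fin n))) ⊆ D.image fun e => e.image ψ := by
      intro u hu
      rcases Finset.mem_insert.1 hu with rfl | hu
      · exact hsA
      · exact (Finset.mem_singleton.1 hu) ▸ htA
    set C := (D.image fun e => e.image ψ) \ {s, t} with hC
    have hcardA : (D.image fun e => e.image ψ).card ≤ k + 1 :=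
      Finset.card_image_le.trans hcardD
    have hcardC : C.card ≤ k - 1 := by
      rw [hC, Finset.card_sdiff_of_subset hpair, Finset.card_pair hst]
      omega
    have hAeq : D.image (fun e => e.image ψ) = insert s (insert t C) := by
      rw [hC]
      rw [Finset.insert_eq, Finset.insert_eq, ← Finset.union_assoc,
        ← Finset.insert_eq]
      exact (Finset.union_sdiff_of_subset hpair).symm
    rw [Finset.mem_coe, hT]
    refine Finset.mem_biUnion.2 ⟨(s, t), Finset.mem_product.2 ⟨hsS, htS⟩, ?_⟩
    refine Finset.mem_image.2 ⟨C, Finset.mem_filter.2 ⟨Finset.mem_powerset.2 ?_, hcardC⟩,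
      hAeq.symm⟩
    exact (Finset.sdiff_subset).trans hAW
  have hfin : T.card ≤ 2 ^ (2 * k ^ 2 - 2 * k - 1) * S.card ^ 2 := by
    have hinner : ∀ p ∈ S ×ˢ S,
        (((S.filter fun u => u ⊆ p.1 ∪ p.2).powerset.filter fun C => C.card ≤ k - 1).image
          fun C => insert p.1 (insert p.2 C)).card ≤ 2 ^ (2 * k ^ 2 - 2 * k - 1) := by
      intro p hp
      obtain ⟨hp1, hp2⟩ := Finset.mem_product.1 hp
      set W := S.filter fun u => u ⊆ p.1 ∪ p.2 with hW
      have hWcard : W.card ≤ 2 ^ k := card_filter_subset_le htrans hp1 hp2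
      refine Finset.card_image_le.trans ?_
      have hsubB : (W.powerset.filter fun C => C.card ≤ k - 1) ⊆
          (Finset.range k).biUnion fun j => W.powersetCard j := by
        intro C hC
        obtain ⟨hC1, hC2⟩ := Finset.mem_filter.1 hC
        refine Finset.mem_biUnion.2 ⟨C.card, Finset.mem_range.2 (by omega), ?_⟩
        exact Finset.mem_powersetCard.2 ⟨Finset.mem_powerset.1 hC1, rfl⟩
      refine (Finset.card_le_card hsubB).trans ?_
      refine (Finset.card_biUnion_le).trans ?_
      have hterm : ∀ j ∈ Finset.range k, (W.powersetCard j).card ≤ 2 ^ (k * (k - 1)) := by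
        intro j hj
        rw [Finset.card_powersetCard]
        calc W.card.choose j ≤ W.card ^ j := Nat.choose_le_pow _ _
          _ ≤ (2 ^ k) ^ j := Nat.pow_le_pow_left hWcard j
          _ ≤ (2 ^ k) ^ (k - 1) := Nat.pow_le_pow_right (Nat.one_le_two_pow)
              (by have := Finset.mem_range.1 hj; omega)
          _ = 2 ^ (k * (k - 1)) := by rw [← pow_mul]
      calc ∑ j ∈ Finset.range k, (W.powersetCard j).card
          ≤ ∑ _j ∈ Finset.range k, 2 ^ (k * (k - 1)) := Finset.sum_le_sum hterm
        _ = k * 2 ^ (k * (k - 1)) := by rw [Finset.sum_const, Finset.card_range, smul_eq_mul]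
        _ ≤ 2 ^ (k - 1) * 2 ^ (k * (k - 1)) := by
            have h2 : k - 1 < 2 ^ (k - 1) := Nat.lt_two_pow_self (n := k - 1)
            exact Nat.mul_le_mul_right _ (by omega)
        _ = 2 ^ (k - 1 + k * (k - 1)) := by rw [← pow_add]
        _ ≤ 2 ^ (2 * k ^ 2 - 2 * k - 1) := by
            refine Nat.pow_le_pow_right (by norm_num) ?_
            have hK : k * (k - 1) + k = k * k := by
              have h1 : k - 1 + 1 = k := by omega
              calc k * (k - 1) + k = k * (k - 1 + 1) := by ring
                _ = k * k := by rw [h1]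
            have h2k : 2 * k ≤ k * k := Nat.mul_le_mul hk (le_refl k)
            have hsq : k ^ 2 = k * k := sq k
            omega
    calc T.card ≤ ∑ p ∈ S ×ˢ S, _ := Finset.card_biUnion_le
      _ ≤ ∑ _p ∈ S ×ˢ S, 2 ^ (2 * k ^ 2 - 2 * k - 1) := Finset.sum_le_sum hinner
      _ = (S ×ˢ S).card * 2 ^ (2 * k ^ 2 - 2 * k - 1) := by
          rw [Finset.sum_const, smul_eq_mul]
      _ = 2 ^ (2 * k ^ 2 - 2 * k - 1) * S.card ^ 2 := by
          rw [Finset.card_product]; ring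
  calc Set.ncard {A : Finset (Finset (Fin k × Fin n)) | A ⊆ S ∧
        ∃ ψ : ℕ → Fin k × Fin n, Set.InjOn ψ ↑(D.sup id) ∧
          A = D.image fun e => e.image ψ}
      ≤ Set.ncard (↑T : Set (Finset (Finset (Fin k × Fin n)))) :=
        Set.ncard_le_ncard hsubT (Finset.finite_toSet T)
    _ = T.card := Set.ncard_coe_finset T
    _ ≤ 2 ^ (2 * k ^ 2 - 2 * k - 1) * S.card ^ 2 := hfin
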